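/- Let L ⊆ Q be an extension of Hom-Lie algebras. Then Q is an algebra of quotients of L if and only if Q is ideally absorbed into L. -/
import Mathlib


/-- A Hom-Lie algebra structure on a vector space `Q` over a field `𝔽`, with the
twisting map `α` additionally satisfying condition (2.1):
`α [x,y] = [α x, y] = [x, α y]`. -/
structure HomLieAlgebra (𝔽 : Type*) [Field 𝔽] (Q : Type*) [AddCommGroup Q] [Module 𝔽 Q] where
  bracket : Q →ₗ[𝔽] Q →ₗ[𝔽] Q
  alpha : Q →ₗ[𝔽] Q
  skew : ∀ x y, bracket x y = - bracket y x
  jacobi : ∀ x y z, bracket (alpha x) (bracket y z) + bracket (alpha y) (bracket z x)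
      + bracket (alpha z) (bracket x y) = 0
  comm₁ : ∀ x y, alpha (bracket x y) = bracket (alpha x) y
  comm₂ : ∀ x y, alpha (bracket x y) = bracket x (alpha y)

namespace HomLieAlgebra

variable {𝔽 : Type*} [Field 𝔽] {Q : Type*} [AddCommGroup Q] [Module 𝔽 Q]
variable (H : HomLieAlgebra 𝔽 Q)

/-- `S` is a Hom-subalgebra: a subspace closed under `α` and the bracket. -/
def IsSubalgebra (S : Submodule 𝔽 Q) : Prop :=
  (∀ x ∈ S, H.alpha x ∈ S) ∧ ∀ x ∈ S, ∀ y ∈ S, H.bracket x y ∈ S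

/-- `I` is a Hom-ideal of the Hom-subalgebra `L`:
a subspace `I ⊆ L` with `α(I) ⊆ I` and `[I, L] ⊆ I`. -/
def IsIdealOf (L I : Submodule 𝔽 Q) : Prop :=
  I ≤ L ∧ (∀ x ∈ I, H.alpha x ∈ I) ∧ ∀ x ∈ I, ∀ y ∈ L, H.bracket x y ∈ I

/-- The α-annihilator of the set `S` inside the subalgebra `M`:
`Ann_M(S) = {x ∈ M | [x, α(y)] = 0 for all y ∈ S}`. -/
def annIn (M : Submodule 𝔽 Q) (S : Set Q) : Set Q :=
  {x | x ∈ M ∧ ∀ y ∈ S, H.bracket x (H.alpha y) = 0}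

/-- `I` is an essential Hom-ideal of `L`: it hits every nonzero Hom-ideal of `L`. -/
def IsEssentialIdealOf (L I : Submodule 𝔽 Q) : Prop :=
  H.IsIdealOf L I ∧ ∀ J : Submodule 𝔽 Q, H.IsIdealOf L J → J ≠ ⊥ → I ⊓ J ≠ ⊥

/-- The Hom-Lie algebra `L` is semiprime: `[I, α(I)] ≠ {0}` for every nonzero
Hom-ideal `I` of `L`. -/
def IsSemiprimeOn (L : Submodule 𝔽 Q) : Prop :=
  ∀ I : Submodule 𝔽 Q, H.IsIdealOf L I → I ≠ ⊥ →
    ∃ x ∈ I, ∃ y ∈ I, H.bracket x (H.alpha y) ≠ 0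

/-- The Hom-Lie algebra `L` is prime: `[I, α(J)] ≠ {0}` for all nonzero
Hom-ideals `I`, `J` of `L`. -/
def IsPrimeOn (L : Submodule 𝔽 Q) : Prop :=
  ∀ I J : Submodule 𝔽 Q, H.IsIdealOf L I → I ≠ ⊥ → H.IsIdealOf L J → J ≠ ⊥ →
    ∃ x ∈ I, ∃ y ∈ J, H.bracket x (H.alpha y) ≠ 0

/-- The iterated brackets `[[…[[q,x₁],x₂],…],xₙ]` with `xᵢ ∈ L` (including `q` itself). -/
inductive IsWord (L : Submodule 𝔽 Q) (q : Q) : Q → Prop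
  | base : IsWord L q q
  | step {p : Q} (x : Q) : IsWord L q p → x ∈ L → IsWord L q (H.bracket p x)

/-- `_L(q)`: the linear span in `Q` of `q` together with all the iterated brackets
`[[…[[q,x₁],x₂],…],xₙ]` with `xᵢ ∈ L`. -/
def wordSpan (L : Submodule 𝔽 Q) (q : Q) : Submodule 𝔽 Q :=
  Submodule.span 𝔽 {p | H.IsWord L q p}

/-- `(L : q) = {x ∈ L | [x, α(_L(q))] ⊆ L}`, as a subspace of `Q`. -/
def quotIdeal (L : Submodule 𝔽 Q) (q : Q) : Submodule 𝔽 Q where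
  carrier := {x | x ∈ L ∧ ∀ p ∈ H.wordSpan L q, H.bracket x (H.alpha p) ∈ L}
  add_mem' := by
    rintro a b ⟨haL, ha⟩ ⟨hbL, hb⟩
    refine ⟨L.add_mem haL hbL, fun p hp => ?_⟩
    rw [map_add, LinearMap.add_apply]
    exact L.add_mem (ha p hp) (hb p hp)
  zero_mem' := ⟨L.zero_mem, fun p _ => by simp⟩
  smul_mem' := by
    rintro c a ⟨haL, ha⟩
    refine ⟨L.smul_mem c haL, fun p hp => ?_⟩
    rw [map_smul, LinearMap.smul_apply]
    exact L.smul_mem c (ha p hp)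

/-- `Q` is an algebra of quotients of its Hom-subalgebra `L`: for all `p, q ∈ Q` with
`p ≠ 0` there is `x ∈ (L : q)` with `[x, α(p)] ≠ 0`. -/
def IsAlgebraOfQuotients (L : Submodule 𝔽 Q) : Prop :=
  ∀ p q : Q, p ≠ 0 → ∃ x ∈ H.quotIdeal L q, H.bracket x (H.alpha p) ≠ 0

/-- `Q` is a weak algebra of quotients of its Hom-subalgebra `L`: for every nonzero
`q ∈ Q` there is `x ∈ L` with `0 ≠ [x, α(q)] ∈ L`. -/
def IsWeakAlgebraOfQuotients (L : Submodule 𝔽 Q) : Prop :=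
  ∀ q : Q, q ≠ 0 → ∃ x ∈ L, H.bracket x (H.alpha q) ≠ 0 ∧ H.bracket x (H.alpha q) ∈ L

/-- `Q` is ideally absorbed into `L`: for every nonzero `q ∈ Q` there is a Hom-ideal `I`
of `L` with `Ann_L(I) = {0}` and `{0} ≠ [I, α(q)] ⊆ L`. -/
def IsIdeallyAbsorbed (L : Submodule 𝔽 Q) : Prop :=
  ∀ q : Q, q ≠ 0 → ∃ I : Submodule 𝔽 Q, H.IsIdealOf L I ∧
    H.annIn L (I : Set Q) = {0} ∧
    (∃ y ∈ I, H.bracket y (H.alpha q) ≠ 0) ∧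
    ∀ y ∈ I, H.bracket y (H.alpha q) ∈ (L : Set Q)

/-- The inner derivation `ad_q : p ↦ [α(q), p]`. -/
def ad (q : Q) : Module.End 𝔽 Q := H.bracket (H.alpha q)

end HomLieAlgebra


namespace HomLieAlgebra

variable {𝔽 : Type*} [Field 𝔽] {Q : Type*} [AddCommGroup Q] [Module 𝔽 Q]
variable (H : HomLieAlgebra 𝔽 Q)

lemma comm' (x y : Q) : H.bracket (H.alpha x) y = H.bracket x (H.alpha y) := by
  rw [← H.comm₁, H.comm₂]

lemma skew' (x y : Q) : H.bracket x (H.alpha y) = - H.bracket y (H.alpha x) := by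
  rw [← H.comm' x y, H.skew]

lemma identA (x z p : Q) :
    H.bracket (H.bracket x z) (H.alpha p)
      = H.bracket x (H.alpha (H.bracket z p)) + H.bracket (H.bracket x (H.alpha p)) z := by
  have hJ := H.jacobi x z p
  have h1 : H.bracket (H.alpha x) (H.bracket z p)
      = H.bracket x (H.alpha (H.bracket z p)) := H.comm' _ _
  have h2 : H.bracket (H.alpha z) (H.bracket p x)
      = H.bracket (H.bracket x (H.alpha p)) z := by
    rw [H.comm' z, H.comm₁ p x, H.skew (H.alpha p) x, map_neg,
      H.skew (H.bracket x (H.alpha p)) z]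
  have h3 : H.bracket (H.bracket x z) (H.alpha p)
      = - H.bracket (H.alpha p) (H.bracket x z) := by
    rw [← H.skew]
  rw [h1, h2] at hJ
  rw [h3]
  exact neg_eq_of_add_eq_zero_left hJ

lemma identB (x w z : Q) :
    H.bracket x (H.alpha (H.bracket w z))
      = H.bracket (H.bracket z x) (H.alpha w) - H.bracket z (H.bracket x (H.alpha w)) := by
  have hJ := H.jacobi x w z
  have h1 : H.bracket (H.alpha x) (H.bracket w z)
      = H.bracket x (H.alpha (H.bracket w z)) := H.comm' _ _
  have h2 : H.bracket (H.alpha w) (H.bracket z x)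
      = - H.bracket (H.bracket z x) (H.alpha w) := by
    rw [H.comm' w, H.skew, H.comm']
  have h3 : H.bracket (H.alpha z) (H.bracket x w)
      = H.bracket z (H.bracket x (H.alpha w)) := by
    rw [H.comm' z, ← H.comm₂ x w]
  rw [h1, h2, h3] at hJ
  have h4 : (H.bracket x (H.alpha (H.bracket w z))
      + H.bracket z (H.bracket x (H.alpha w)))
      + - H.bracket (H.bracket z x) (H.alpha w) = 0 := by
    rw [← hJ]; abel
  exact eq_sub_of_add_eq (add_neg_eq_zero.mp h4)

lemma q_mem_wordSpan (L : Submodule 𝔽 Q) (q : Q) : q ∈ H.wordSpan L q :=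
  Submodule.subset_span IsWord.base

lemma wordSpan_bracket {L : Submodule 𝔽 Q} {q z : Q} (hz : z ∈ L) {p : Q}
    (hp : p ∈ H.wordSpan L q) : H.bracket p z ∈ H.wordSpan L q := by
  induction hp using Submodule.span_induction with
  | mem w hw => exact Submodule.subset_span (IsWord.step z hw hz)
  | zero => simp
  | add a b _ _ ha hb =>
      rw [map_add, LinearMap.add_apply]; exact (H.wordSpan L q).add_mem ha hb
  | smul c a _ ha =>
      rw [map_smul, LinearMap.smul_apply]; exact (H.wordSpan L q).smul_mem c ha

lemma ideal_le_quotIdeal {L I : Submodule 𝔽 Q} (hL : H.IsSubalgebra L)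
    (hI : H.IsIdealOf L I) (q : Q) (hq : ∀ x ∈ I, H.bracket x (H.alpha q) ∈ L) :
    I ≤ H.quotIdeal L q := by
  intro x hx
  refine ⟨hI.1 hx, fun p hp => ?_⟩
  have main : ∀ w, H.IsWord L q w → ∀ x ∈ I, H.bracket x (H.alpha w) ∈ L := by
    intro w hw
    induction hw with
    | base => exact hq
    | @step w' z hw' hz ih =>
        intro x hx
        rw [H.identB x w' z]
        have hzx : H.bracket z x ∈ I := by
          rw [H.skew]; exact I.neg_mem (hI.2.2 x hx z hz)
        exact L.sub_mem (ih _ hzx) (hL.2 z hz _ (ih x hx))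
  have main2 : ∀ p ∈ H.wordSpan L q, ∀ x ∈ I, H.bracket x (H.alpha p) ∈ L := by
    intro p hp
    induction hp using Submodule.span_induction with
    | mem w hw => exact main w hw
    | zero => intro y _; simp
    | add a b _ _ ha hb =>
        intro y hy
        rw [map_add, map_add]
        exact L.add_mem (ha y hy) (hb y hy)
    | smul c a _ ha =>
        intro y hy
        rw [map_smul, map_smul]
        exact L.smul_mem c (ha y hy)
  exact main2 p hp x hx

end HomLieAlgebra

/-- `Q` is an algebra of quotients of its Hom-subalgebra `L` iff `Q` is ideally
absorbed into `L`. -/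
theorem isAlgebraOfQuotients_iff_isIdeallyAbsorbed
    {𝔽 Q : Type*} [Field 𝔽] [AddCommGroup Q] [Module 𝔽 Q]
    (H : HomLieAlgebra 𝔽 Q) (L : Submodule 𝔽 Q) (hL : H.IsSubalgebra L) :
    H.IsAlgebraOfQuotients L ↔ H.IsIdeallyAbsorbed L := by
  constructor
  · -- quotients → ideally absorbed, with I = (L : q)
    intro hQ q hq
    refine ⟨H.quotIdeal L q, ⟨fun x hx => hx.1, ?_, ?_⟩, ?_, hQ q q hq,
      fun y hy => hy.2 q (H.q_mem_wordSpan L q)⟩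
    · -- closed under α
      intro x hx
      refine ⟨hL.1 x hx.1, fun p hp => ?_⟩
      rw [← H.comm₁]
      exact hL.1 _ (hx.2 p hp)
    · -- ideal property
      intro x hx z hz
      refine ⟨hL.2 x hx.1 z hz, fun p hp => ?_⟩
      rw [H.identA x z p]
      have h1 : H.bracket z p ∈ H.wordSpan L q := by
        rw [H.skew]
        exact Submodule.neg_mem _ (H.wordSpan_bracket hz hp)
      exact L.add_mem (hx.2 _ h1) (hL.2 _ (hx.2 p hp) z hz)
    · -- trivial annihilator
      refine Set.eq_singleton_iff_unique_mem.mpr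
        ⟨⟨L.zero_mem, fun y _ => by simp⟩, fun x hx => ?_⟩
      by_contra hx0
      obtain ⟨y, hy, hyne⟩ := hQ x q hx0
      exact hyne (by rw [H.skew' y x, hx.2 y hy, neg_zero])
  · -- ideally absorbed → quotients
    intro hA p q hp
    rcases eq_or_ne q 0 with rfl | hq
    · obtain ⟨J, hJid, -, ⟨y, hyJ, hy⟩, -⟩ := hA p hp
      exact ⟨y, H.ideal_le_quotIdeal hL hJid 0 (fun x _ => by simp) hyJ, hy⟩
    · obtain ⟨I, hIid, hIann, -, hIL⟩ := hA q hq
      by_contra hcon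
      push_neg at hcon
      have h0 : ∀ x ∈ I, H.bracket x (H.alpha p) = 0 := fun x hx =>
        hcon x (H.ideal_le_quotIdeal hL hIid q hIL hx)
      obtain ⟨J, hJid, -, ⟨y, hyJ, hy⟩, hJL⟩ := hA p hp
      have huL : H.bracket y (H.alpha p) ∈ L := hJL y hyJ
      have hann : H.bracket y (H.alpha p) ∈ H.annIn L (I : Set Q) := by
        refine ⟨huL, fun z hz => ?_⟩
        have t2 : H.bracket (H.alpha y) (H.bracket (H.alpha p) z) = 0 := by
          rw [H.skew (H.alpha p) z, h0 z hz, neg_zero, map_zero]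
        have t3 : H.bracket (H.alpha (H.alpha p)) (H.bracket z y) = 0 := by
          have hzy : H.bracket z y ∈ I := hIid.2.2 z hz y (hJid.1 hyJ)
          rw [H.comm', H.skew, ← H.comm₁, h0 _ hzy, map_zero, neg_zero]
        have t1 : H.bracket (H.alpha z) (H.bracket y (H.alpha p)) = 0 := by
          have hJz := H.jacobi z y (H.alpha p)
          rw [t2, t3, add_zero, add_zero] at hJz
          exact hJz
        rw [H.skew, t1, neg_zero]
      rw [hIann] at hann
      exact hy hann
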